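/- Let n ≥ 5 and let v : ℝ^n → ℝ be defined by v(y) = (1 + |y|^2/4)^{-(n-4)/2}. Then v satisfies Δ²v = ((n-4)/2) · Q̄ · v^{(n+4)/(n-4)} on ℝ^n, where Q̄ = n(n²-4)/8 and Δ² is the Euclidean bilaplacian. -/

import Mathlib

open scoped RealInnerProductSpace

/-- The Euclidean Laplacian of a real-valued function on `ℝⁿ`. -/
noncomputable def laplacian {n : ℕ} (f : EuclideanSpace ℝ (Fin n) → ℝ)
    (x : EuclideanSpace ℝ (Fin n)) : ℝ :=
  ∑ i : Fin n, iteratedFDeriv ℝ 2 f x ![EuclideanSpace.single i 1, EuclideanSpace.single i 1]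

namespace Stmt5Aux

variable {n : ℕ}

/-- The basic radial power function. -/
noncomputable def f (n : ℕ) (p : ℝ) (y : EuclideanSpace ℝ (Fin n)) : ℝ :=
  (1 + ‖y‖ ^ 2 / 4) ^ p

lemma u_pos (y : EuclideanSpace ℝ (Fin n)) : 0 < 1 + ‖y‖ ^ 2 / 4 := by positivity

lemma contDiff_f (p : ℝ) {m : WithTop ℕ∞} : ContDiff ℝ m (f n p) := by
  have hb : ContDiff ℝ m (fun y : EuclideanSpace ℝ (Fin n) => 1 + ‖y‖ ^ 2 / 4) :=
    contDiff_const.add (contDiff_norm_sq ℝ |>.div_const 4)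
  rw [contDiff_iff_contDiffAt]
  intro y
  exact (Real.contDiffAt_rpow_const_of_ne (u_pos y).ne').comp y hb.contDiffAt

lemma hasFDerivAt_f (p : ℝ) (x : EuclideanSpace ℝ (Fin n)) :
    HasFDerivAt (f n p)
      (((p / 2) * (1 + ‖x‖ ^ 2 / 4) ^ (p - 1)) • innerSL ℝ x) x := by
  have h2 : HasFDerivAt (fun y : EuclideanSpace ℝ (Fin n) => ‖y‖ ^ 2)
      (2 • innerSL ℝ x) x := (hasStrictFDerivAt_norm_sq x).hasFDerivAt
  have hu : HasFDerivAt (fun y : EuclideanSpace ℝ (Fin n) => 1 + ‖y‖ ^ 2 / 4)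
      ((4 : ℝ)⁻¹ • (2 • innerSL ℝ x)) x := by
    have := (h2.const_smul (4 : ℝ)⁻¹).const_add 1
    simpa [smul_eq_mul, div_eq_inv_mul] using this
  have h3 := (Real.hasDerivAt_rpow_const (x := 1 + ‖x‖ ^ 2 / 4) (p := p)
      (Or.inl (u_pos x).ne')).comp_hasFDerivAt x hu
  refine h3.congr_fderiv ?_
  ext w
  simp [ContinuousLinearMap.smul_apply, smul_eq_mul]
  ring

lemma fderiv_f (p : ℝ) (x : EuclideanSpace ℝ (Fin n)) :
    fderiv ℝ (f n p) x = ((p / 2) * (1 + ‖x‖ ^ 2 / 4) ^ (p - 1)) • innerSL ℝ x :=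
  (hasFDerivAt_f p x).fderiv

lemma sum_sq (x : EuclideanSpace ℝ (Fin n)) : ∑ i, x i ^ 2 = ‖x‖ ^ 2 := by
  rw [← real_inner_self_eq_norm_sq]
  simp only [PiLp.inner_apply, RCLike.inner_apply, conj_trivial, sq]

lemma second_deriv_f (p : ℝ) (x : EuclideanSpace ℝ (Fin n)) (i : Fin n) :
    iteratedFDeriv ℝ 2 (f n p) x ![EuclideanSpace.single i 1, EuclideanSpace.single i 1]
      = (p / 2) * ((p - 1) / 2) * (1 + ‖x‖ ^ 2 / 4) ^ (p - 2) * (x i) ^ 2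
        + (p / 2) * (1 + ‖x‖ ^ 2 / 4) ^ (p - 1) := by
  set w : EuclideanSpace ℝ (Fin n) := EuclideanSpace.single i 1 with hw
  have hdiff : DifferentiableAt ℝ (fderiv ℝ (f n p)) x := by
    have h1 : ContDiff ℝ 1 (fderiv ℝ (f n p)) :=
      (contDiff_f p (m := 2)).fderiv_right (by norm_num)
    exact (h1.differentiable (by norm_num)).differentiableAt
  rw [iteratedFDeriv_two_apply]
  have key : fderiv ℝ (fderiv ℝ (f n p)) x w w
      = fderiv ℝ (fun y => fderiv ℝ (f n p) y w) x w := by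
    rw [fderiv_clm_apply hdiff (differentiableAt_const w)]
    simp
  simp only [Matrix.cons_val_zero, Matrix.cons_val_one, Matrix.head_cons]
  rw [key]
  -- identify the scalar function
  have hfun : (fun y => fderiv ℝ (f n p) y w)
      = fun y => ((p / 2) * f n (p - 1) y) * (innerSL ℝ w) y := by
    funext y
    rw [fderiv_f]
    simp only [ContinuousLinearMap.smul_apply, innerSL_apply_apply, smul_eq_mul, f]
    rw [real_inner_comm]
  rw [hfun]
  have hc : HasFDerivAt (fun y => (p / 2) * f n (p - 1) y)
      ((p / 2) • (((p - 1) / 2) * (1 + ‖x‖ ^ 2 / 4) ^ (p - 1 - 1)) • innerSL ℝ x) x :=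
    (hasFDerivAt_f (p - 1) x).const_mul (p / 2)
  have hl : HasFDerivAt (fun y => (innerSL ℝ w) y) (innerSL ℝ w) x :=
    (innerSL ℝ w).hasFDerivAt
  have := (hc.mul hl).fderiv
  erw [this]
  have hww : (innerSL ℝ w) w = (1 : ℝ) := by
    simp [hw, innerSL_apply_apply, EuclideanSpace.inner_single_left, EuclideanSpace.single_apply]
  have hwx : (innerSL ℝ w) x = x i := by
    simp [hw, innerSL_apply_apply, EuclideanSpace.inner_single_left]
  have hxw : (innerSL ℝ x) w = x i := by
    simp [hw, innerSL_apply_apply, EuclideanSpace.inner_single_right]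
  have hexp : p - 1 - 1 = p - 2 := by ring
  simp only [ContinuousLinearMap.add_apply, ContinuousLinearMap.smul_apply, smul_eq_mul,
    hww, hwx, hxw, hexp, f]
  ring

/-- The key Laplacian computation. -/
lemma lap_f (p : ℝ) (x : EuclideanSpace ℝ (Fin n)) :
    laplacian (f n p) x
      = (p * (p - 1 + (n : ℝ) / 2)) * f n (p - 1) x + (-(p * (p - 1))) * f n (p - 2) x := by
  unfold laplacian
  simp only [second_deriv_f]
  rw [Finset.sum_add_distrib, Finset.sum_const, ← Finset.mul_sum, sum_sq]
  have hu : (0 : ℝ) < 1 + ‖x‖ ^ 2 / 4 := u_pos x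
  have h1 : (1 + ‖x‖ ^ 2 / 4) ^ (p - 1) = (1 + ‖x‖ ^ 2 / 4) ^ (p - 2) * (1 + ‖x‖ ^ 2 / 4) := by
    rw [show p - 1 = p - 2 + 1 by ring, Real.rpow_add_one hu.ne']
  simp only [f, h1, Finset.card_univ, Fintype.card_fin, nsmul_eq_mul]
  ring

lemma lap_comb (a b q r : ℝ) (x : EuclideanSpace ℝ (Fin n)) :
    laplacian (fun y => a * f n q y + b * f n r y) x
      = a * laplacian (f n q) x + b * laplacian (f n r) x := by
  unfold laplacian
  have h1 : (fun y => a * f n q y + b * f n r y) = (a • f n q) + (b • f n r) := by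
    funext y; simp [Pi.add_apply, Pi.smul_apply, smul_eq_mul]
  rw [h1]
  have hq : ContDiff ℝ (2 : ℕ) (a • f n q) := (contDiff_f q).const_smul a
  have hr : ContDiff ℝ (2 : ℕ) (b • f n r) := (contDiff_f r).const_smul b
  simp only [iteratedFDeriv_add_apply hq.contDiffAt hr.contDiffAt,
    iteratedFDeriv_const_smul_apply (contDiff_f q (m := 2)).contDiffAt,
    iteratedFDeriv_const_smul_apply (contDiff_f r (m := 2)).contDiffAt,
    ContinuousMultilinearMap.add_apply, ContinuousMultilinearMap.smul_apply, smul_eq_mul]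
  rw [Finset.sum_add_distrib, Finset.mul_sum, Finset.mul_sum]

end Stmt5Aux

theorem stmt_5 (n : ℕ) (hn : 5 ≤ n)
    (v : EuclideanSpace ℝ (Fin n) → ℝ)
    (hv : ∀ y, v y = (1 + ‖y‖ ^ 2 / 4) ^ (-(((n : ℝ) - 4) / 2))) :
    ∀ y, laplacian (laplacian v) y
      = (((n : ℝ) - 4) / 2) * ((n : ℝ) * ((n : ℝ) ^ 2 - 4) / 8)
          * (v y) ^ (((n : ℝ) + 4) / ((n : ℝ) - 4)) := by
  intro y
  set N : ℝ := (n : ℝ) with hN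
  have hN5 : (5 : ℝ) ≤ N := by rw [hN]; exact_mod_cast hn
  have hN4 : N - 4 ≠ 0 := by nlinarith
  set p₀ : ℝ := -((N - 4) / 2) with hp₀
  have hveq : v = Stmt5Aux.f n p₀ := by
    funext z; rw [hv z]; rfl
  have hΔ : laplacian v = fun z =>
      (p₀ * (p₀ - 1 + N / 2)) * Stmt5Aux.f n (p₀ - 1) z
        + (-(p₀ * (p₀ - 1))) * Stmt5Aux.f n (p₀ - 2) z := by
    funext z
    rw [hveq, Stmt5Aux.lap_f]
  rw [hΔ, Stmt5Aux.lap_comb, Stmt5Aux.lap_f, Stmt5Aux.lap_f]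
  have e1 : p₀ - 1 - 1 = p₀ - 2 := by ring
  have e2 : p₀ - 1 - 2 = p₀ - 3 := by ring
  have e3 : p₀ - 2 - 1 = p₀ - 3 := by ring
  have e4 : p₀ - 2 - 2 = p₀ - 4 := by ring
  rw [e1, e2, e3, e4]
  have hbase : (v y) ^ ((N + 4) / (N - 4)) = Stmt5Aux.f n (p₀ - 4) y := by
    rw [hveq]
    show ((1 + ‖y‖ ^ 2 / 4) ^ p₀) ^ ((N + 4) / (N - 4)) = (1 + ‖y‖ ^ 2 / 4) ^ (p₀ - 4)
    rw [← Real.rpow_mul (Stmt5Aux.u_pos y).le]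
    congr 1
    field_simp [hp₀]
    ring
  rw [hbase]
  have hp : p₀ = -((N - 4) / 2) := hp₀
  rw [hp]
  ring
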